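/- arXiv:1211.7264 — 2 statements merged into one kernel-verified Lean document; each statement's English description precedes it below -/
import Mathlib

section
/- Let 𝔊 be a [𝔧,m]-marked basis in R. Then for every monomial x^β and every variable x_i, the normal forms satisfy Nf(x_i x^β) = Nf(x_i · Nf(x^β)). -/
open MvPolynomial

namespace Paper

/-- Monomials (exponent vectors) in `N` variables. -/
abbrev Mon (N : ℕ) := Fin N →₀ ℕ

variable {N : ℕ}

/-- Total degree of a monomial. -/
def mdeg (u : Mon N) : ℕ := u.sum fun _ e => e

/-- `BorelStep a b` : `b` is obtained from `a` by one increasing elementary move,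
i.e. `x^a · x_j = x^b · x_i` with `i < j`. -/
def BorelStep (a b : Mon N) : Prop :=
  ∃ i j : Fin N, i < j ∧ a + Finsupp.single j 1 = b + Finsupp.single i 1

/-- `BorelLt a b` : `a <_B b`, i.e. `b` is obtained from `a` by a nonempty
sequence of increasing elementary moves. -/
def BorelLt (a b : Mon N) : Prop := Relation.TransGen BorelStep a b

/-- A (combinatorially encoded) monomial ideal: a set of monomials closed
under multiplication by monomials. -/
def MonIdeal (J : Set (Mon N)) : Prop := ∀ u ∈ J, ∀ d : Mon N, u + d ∈ J

/-- A strongly stable monomial ideal. -/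
def StronglyStable (J : Set (Mon N)) : Prop :=
  MonIdeal J ∧ ∀ b ∈ J, ∀ a, BorelLt b a → a ∈ J

/-- The minimal monomial basis `B_J` of a monomial ideal. -/
def MinBasis (J : Set (Mon N)) : Set (Mon N) :=
  {u | u ∈ J ∧ ∀ v ∈ J, v ≤ u → v = u}

/-- `min(x^a) ≥ max(x^h)`. -/
def StarCond (a h : Mon N) : Prop :=
  ∀ i j : Fin N, a i ≠ 0 → h j ≠ 0 → j ≤ i


variable (K : Type) [Field K]

/-- The monomial `x^u` as a polynomial. -/
noncomputable def mono {N : ℕ} (u : Mon N) : MvPolynomial (Fin N) K :=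
  MvPolynomial.monomial u (1 : K)

/-- The (actual) monomial ideal of `S` spanned by a set of monomials. -/
noncomputable def idealOf {N : ℕ} (J : Set (Mon N)) : Ideal (MvPolynomial (Fin N) K) :=
  Ideal.span (mono K '' J)

/-- The irrelevant maximal ideal `(x_0, …, x_n)`. -/
noncomputable def irrel (N : ℕ) : Ideal (MvPolynomial (Fin N) K) :=
  Ideal.span (Set.range MvPolynomial.X)

/-- The saturation `I^sat = ⋃_j (I : (x_0,…,x_n)^j)`. -/
noncomputable def satIdeal {N : ℕ} (I : Ideal (MvPolynomial (Fin N) K)) :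
    Ideal (MvPolynomial (Fin N) K) :=
  ⨆ k : ℕ, Submodule.colon I ((irrel K N ^ k : Ideal (MvPolynomial (Fin N) K)) : Set (MvPolynomial (Fin N) K))

/-- The satiety of a homogeneous ideal: the smallest `m` such that
`I_t = (I^sat)_t` for all `t ≥ m`. -/
noncomputable def satiety {N : ℕ} (I : Ideal (MvPolynomial (Fin N) K)) : ℕ :=
  sInf {m | ∀ t, m ≤ t → ∀ p : MvPolynomial (Fin N) K,
    p.IsHomogeneous t → (p ∈ I ↔ p ∈ satIdeal K I)}

/-- The saturation of a combinatorial monomial ideal. -/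
def msat {N : ℕ} (J : Set (Mon N)) : Set (Mon N) :=
  {u | ∃ k : ℕ, ∀ d : Mon N, mdeg d = k → u + d ∈ J}

/-- The satiety of a combinatorial monomial ideal. -/
noncomputable def msatiety {N : ℕ} (J : Set (Mon N)) : ℕ :=
  sInf {m | ∀ u : Mon N, m ≤ mdeg u → (u ∈ J ↔ u ∈ msat J)}

/-- A non-homogeneous `𝔧`-marked set: marked polynomials `f_α` with pairwise
distinct head terms forming `B_𝔧` and tails supported outside `𝔧`. -/
def NHMarkedSet {N : ℕ} (𝔧 : Set (Mon N)) (f : Mon N → MvPolynomial (Fin N) K) : Prop :=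
  ∀ α ∈ MinBasis 𝔧,
    MvPolynomial.coeff α (f α) = 1 ∧
    ∀ u ∈ (f α).support, u ≠ α → u ∉ 𝔧

/-- One step of the `𝔊_∗`-reduction: the monomial `x^γ = x^α ∗_𝔧 x^η` of the
support of `g` is replaced by `x^η · T(f_α)`. -/
def RStep {N : ℕ} (𝔧 : Set (Mon N)) (f : Mon N → MvPolynomial (Fin N) K)
    (g g₁ : MvPolynomial (Fin N) K) : Prop :=
  ∃ γ α η : Mon N, γ ∈ g.support ∧ γ ∈ 𝔧 ∧ α ∈ MinBasis 𝔧 ∧ γ = α + η ∧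
    StarCond α η ∧
    g₁ = g - MvPolynomial.coeff γ g • (mono K η * f α)

/-- The `𝔊_∗`-reduction relation (reflexive-transitive closure of `RStep`). -/
def Reduces {N : ℕ} (𝔧 : Set (Mon N)) (f : Mon N → MvPolynomial (Fin N) K) :
    MvPolynomial (Fin N) K → MvPolynomial (Fin N) K → Prop :=
  Relation.ReflTransGen (RStep K 𝔧 f)

/-- `g` is reduced: `supp(g) ∩ 𝔧 = ∅`. -/
def IsReducedPoly {N : ℕ} (𝔧 : Set (Mon N)) (g : MvPolynomial (Fin N) K) : Prop :=
  ∀ u ∈ g.support, u ∉ 𝔧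

/-- A `[𝔧,m]`-marked set: a n.h. `𝔧`-marked set whose tails are supported in
`N(𝔧)_{≤ max{m,|α|}}`. -/
def JmMarkedSet {N : ℕ} (𝔧 : Set (Mon N)) (m : ℕ)
    (f : Mon N → MvPolynomial (Fin N) K) : Prop :=
  ∀ α ∈ MinBasis 𝔧,
    MvPolynomial.coeff α (f α) = 1 ∧
    ∀ u ∈ (f α).support, u ≠ α → (u ∉ 𝔧 ∧ mdeg u ≤ max m (mdeg α))

/-- The ideal `(𝔊)` generated by a marked set. -/
noncomputable def idealG {N : ℕ} (𝔧 : Set (Mon N))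
    (f : Mon N → MvPolynomial (Fin N) K) : Ideal (MvPolynomial (Fin N) K) :=
  Ideal.span (f '' MinBasis 𝔧)

/-- A `[𝔧,m]`-completion of `𝔊`: marked polynomials `f_β ∈ (𝔊)` with pairwise
distinct head terms the monomials of `𝔧_{≤m} \ B_𝔧` and tails in `N(𝔧)_{≤m}`. -/
def IsCompletion {N : ℕ} (𝔧 : Set (Mon N)) (m : ℕ)
    (f h : Mon N → MvPolynomial (Fin N) K) : Prop :=
  ∀ β : Mon N, β ∈ 𝔧 → mdeg β ≤ m → β ∉ MinBasis 𝔧 →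
    h β ∈ idealG K 𝔧 f ∧
    MvPolynomial.coeff β (h β) = 1 ∧
    ∀ u ∈ (h β).support, u ≠ β → (u ∉ 𝔧 ∧ mdeg u ≤ m)

/-- `g'` is a `[𝔧,m]`-reduced form of `g` modulo `(𝔊)`. -/
def IsReducedForm {N : ℕ} (𝔧 : Set (Mon N)) (m : ℕ)
    (f : Mon N → MvPolynomial (Fin N) K)
    (g g' : MvPolynomial (Fin N) K) : Prop :=
  (∀ u ∈ g'.support, u ∉ 𝔧 ∧ mdeg u ≤ max m g.totalDegree) ∧
  g - g' ∈ idealG K 𝔧 f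

/-- `R_{≤ t}`: the `K`-subspace of polynomials of degree at most `t`. -/
noncomputable def degLE (N : ℕ) (t : ℕ) : Submodule K (MvPolynomial (Fin N) K) where
  carrier := {g | ∀ u ∈ g.support, mdeg u ≤ t}
  zero_mem' := by simp
  add_mem' := by
    intro a b ha hb u hu
    rcases Finset.mem_union.mp (MvPolynomial.support_add hu) with h | h
    · exact ha u h
    · exact hb u h
  smul_mem' := by
    intro c a ha u hu
    exact ha u (MvPolynomial.support_smul hu)

/-- `⟨N(𝔧)_{≤t}⟩`: the `K`-span of the monomials outside `𝔧` of degree `≤ t`. -/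
noncomputable def spanNLE {N : ℕ} (𝔧 : Set (Mon N)) (t : ℕ) :
    Submodule K (MvPolynomial (Fin N) K) :=
  Submodule.span K (mono K '' {u : Mon N | u ∉ 𝔧 ∧ mdeg u ≤ t})

/-- `(𝔊)_{≤t}`: the `K`-subspace of elements of `(𝔊)` of degree `≤ t`. -/
noncomputable def GleSub {N : ℕ} (𝔧 : Set (Mon N))
    (f : Mon N → MvPolynomial (Fin N) K) (t : ℕ) :
    Submodule K (MvPolynomial (Fin N) K) :=
  (idealG K 𝔧 f).restrictScalars K ⊓ degLE K N t

/-- A `[𝔧,m]`-marked basis: a `[𝔧,m]`-marked set with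
`R_{≤t} = ⟨N(𝔧)_{≤t}⟩ ⊕ (𝔊)_{≤t}` for all `t ≥ m`. -/
def JmMarkedBasis {N : ℕ} (𝔧 : Set (Mon N)) (m : ℕ)
    (f : Mon N → MvPolynomial (Fin N) K) : Prop :=
  JmMarkedSet K 𝔧 m f ∧
  ∀ t, m ≤ t →
    Disjoint (spanNLE K 𝔧 t) (GleSub K 𝔧 f t) ∧
    spanNLE K 𝔧 t ⊔ GleSub K 𝔧 f t = degLE K N t


lemma aux_mem_span {N : ℕ} (K : Type) [Field K] {S : Set (Mon N)}
    (p : MvPolynomial (Fin N) K) (h : ∀ u ∈ p.support, u ∈ S) :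
    p ∈ Submodule.span K (mono K '' S) := by
  rw [p.as_sum]
  refine Submodule.sum_mem _ fun v hv => ?_
  have : (MvPolynomial.monomial v) (MvPolynomial.coeff v p)
      = MvPolynomial.coeff v p • mono K v := by
    simp [mono, MvPolynomial.smul_monomial]
  rw [this]
  exact Submodule.smul_mem _ _ (Submodule.subset_span ⟨v, h v hv, rfl⟩)

/-- if `𝔊` is a `[𝔧,m]`-marked basis, with normal form operator
`Nf`, then `Nf(x_i x^β) = Nf(x_i · Nf(x^β))` for every monomial `x^β` and
variable `x_i`. -/
theorem normalForm_mul_var {n : ℕ} (K : Type) [Field K]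
    (𝔧 : Set (Mon n)) (m : ℕ) (f : Mon n → MvPolynomial (Fin n) K)
    (hss : StronglyStable 𝔧) (hm : 0 < m) (hb : JmMarkedBasis K 𝔧 m f)
    (Nf : MvPolynomial (Fin n) K → MvPolynomial (Fin n) K)
    (hNf : ∀ g, IsReducedForm K 𝔧 m f g (Nf g)) :
    ∀ (β : Mon n) (i : Fin n),
      Nf (MvPolynomial.X i * mono K β) = Nf (MvPolynomial.X i * Nf (mono K β)) := by
  intro β i
  set g1 := MvPolynomial.X i * mono K β with hg1
  set g2 := MvPolynomial.X i * Nf (mono K β) with hg2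
  obtain ⟨h1s, h1i⟩ := hNf g1
  obtain ⟨h2s, h2i⟩ := hNf g2
  obtain ⟨h0s, h0i⟩ := hNf (mono K β)
  set t := max m (max g1.totalDegree g2.totalDegree) with ht
  have hmt : m ≤ t := le_max_left _ _
  have hdisj := (hb.2 t hmt).1
  have hd_ideal : Nf g1 - Nf g2 ∈ idealG K 𝔧 f := by
    have h12 : g1 - g2 ∈ idealG K 𝔧 f := by
      have : g1 - g2 = MvPolynomial.X i * (mono K β - Nf (mono K β)) := by ring
      rw [this]
      exact Ideal.mul_mem_left _ _ h0i
    have : Nf g1 - Nf g2 = -(g1 - Nf g1) + (g1 - g2) + (g2 - Nf g2) := by ring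
    rw [this]
    exact add_mem (add_mem (neg_mem h1i) h12) h2i
  have hsupp : ∀ u ∈ (Nf g1 - Nf g2).support, u ∉ 𝔧 ∧ mdeg u ≤ t := by
    intro u hu
    rcases Finset.mem_union.mp (MvPolynomial.support_sub _ _ _ hu) with h | h
    · obtain ⟨h1, h2⟩ := h1s u h
      exact ⟨h1, h2.trans (max_le (le_max_left _ _)
        ((le_max_left _ _).trans (le_max_right _ _)))⟩
    · obtain ⟨h1, h2⟩ := h2s u h
      exact ⟨h1, h2.trans (max_le (le_max_left _ _)
        ((le_max_right _ _).trans (le_max_right _ _)))⟩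
  have hmem1 : Nf g1 - Nf g2 ∈ spanNLE K 𝔧 t := aux_mem_span K _ hsupp
  have hmem2 : Nf g1 - Nf g2 ∈ GleSub K 𝔧 f t :=
    ⟨hd_ideal, fun u hu => (hsupp u hu).2⟩
  have := Submodule.disjoint_def.mp hdisj _ hmem1 hmem2
  exact sub_eq_zero.mp this

end Paper
end

section
/- Let 𝔧 be a strongly stable ideal in R and J^h = (B_𝔧)S its homogenization in S = K[x_0,...,x_n]. A monomial x^γ in R belongs to N(𝔧) if and only if x_0^r x^γ belongs to N(𝔧^h) for every r ≥ 0. Dually, if J is a saturated strongly stable ideal in S, then a monomial x^γ in S belongs to N(J) if and only if its dehomogenization (x^γ)^a belongs to N(J^a), where J^a = (B_J)R. -/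
open MvPolynomial

namespace Paper

variable {N : ℕ}

variable (K : Type) [Field K]

variable {n : ℕ}

/-- Embedding of monomials of `R = K[x_1,…,x_n]` into
`S = K[x_0,x_1,…,x_n]` (index `0` is the extra smallest variable `x_0`). -/
noncomputable def emb : Mon n → Mon (n + 1) := Finsupp.mapDomain Fin.succ

/-- Dehomogenization of monomials: set `x_0 = 1`, i.e. forget the exponent
of `x_0`. -/
noncomputable def dehomM (v : Mon (n + 1)) : Mon n :=
  Finsupp.comapDomain Fin.succ v (Fin.succ_injective n).injOn

/-- The monomial ideal generated by a set `B` of monomials. -/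
def genBy {N : ℕ} (B : Set (Mon N)) : Set (Mon N) :=
  {v | ∃ b ∈ B, b ≤ v}

/-- The homogenization `f^h ∈ S` of a polynomial `f ∈ R`. -/
noncomputable def homogPoly (f : MvPolynomial (Fin n) K) :
    MvPolynomial (Fin (n + 1)) K :=
  ∑ u ∈ f.support,
    MvPolynomial.monomial (emb u + Finsupp.single 0 (f.totalDegree - mdeg u))
      (MvPolynomial.coeff u f)

/-- The dehomogenization `F^a ∈ R` of a polynomial `F ∈ S` (set `x_0 = 1`). -/
noncomputable def dehomPoly : MvPolynomial (Fin (n + 1)) K →ₐ[K] MvPolynomial (Fin n) K :=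
  MvPolynomial.aeval
    (Fin.cases (motive := fun _ => MvPolynomial (Fin n) K) 1 MvPolynomial.X)


section Aux

lemma mdeg_eq_sum {N : ℕ} (u : Mon N) : mdeg u = ∑ i, u i :=
  Finsupp.sum_fintype _ _ (fun _ => rfl)

lemma mdeg_lt_of_lt {N : ℕ} {a b : Mon N} (hle : a ≤ b) (hne : a ≠ b) :
    mdeg a < mdeg b := by
  rw [mdeg_eq_sum, mdeg_eq_sum]
  obtain ⟨i, hi⟩ : ∃ i, a i ≠ b i := by
    by_contra h'; push_neg at h'; exact hne (Finsupp.ext h')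
  exact Finset.sum_lt_sum (fun i _ => Finsupp.le_def.mp hle i)
    ⟨i, Finset.mem_univ i, lt_of_le_of_ne (Finsupp.le_def.mp hle i) hi⟩

lemma mem_iff_minBasis_le {N : ℕ} {J : Set (Mon N)} (hJ : MonIdeal J) (γ : Mon N) :
    γ ∈ J ↔ ∃ b ∈ MinBasis J, b ≤ γ := by
  constructor
  · intro hγ
    have hS : {k | ∃ v, v ∈ J ∧ v ≤ γ ∧ mdeg v = k}.Nonempty := ⟨mdeg γ, γ, hγ, le_rfl, rfl⟩
    obtain ⟨v, hvJ, hvγ, hvm⟩ := Nat.sInf_mem hS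
    refine ⟨v, ⟨hvJ, fun w hwJ hwv => ?_⟩, hvγ⟩
    by_contra hne
    have h1 : mdeg w < mdeg v := mdeg_lt_of_lt hwv hne
    have h2 : sInf {k | ∃ v, v ∈ J ∧ v ≤ γ ∧ mdeg v = k} ≤ mdeg w :=
      Nat.sInf_le ⟨w, hwJ, hwv.trans hvγ, rfl⟩
    omega
  · rintro ⟨b, hb, hle⟩
    have := hJ b hb.1 (γ - b)
    rwa [add_tsub_cancel_of_le hle] at this

lemma mdeg_add {N : ℕ} (a b : Mon N) : mdeg (a + b) = mdeg a + mdeg b := by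
  simp [mdeg_eq_sum, Finset.sum_add_distrib]

lemma mdeg_single {N : ℕ} (j : Fin N) (m : ℕ) : mdeg (Finsupp.single j m) = m := by
  simp [mdeg, Finsupp.sum_single_index]

lemma mdeg_zero_iff {N : ℕ} {d : Mon N} : mdeg d = 0 ↔ d = 0 := by
  rw [mdeg_eq_sum]
  constructor
  · intro h; ext i
    have := Finset.sum_eq_zero_iff.mp h i (Finset.mem_univ i)
    simpa using this
  · intro h; simp [h]

lemma borel_chain {n : ℕ} : ∀ (k : ℕ) (c d : Mon (n + 1)), mdeg d = k →
    Relation.ReflTransGen BorelStep (c + Finsupp.single 0 k) (c + d) := by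
  intro k
  induction k with
  | zero =>
    intro c d hd
    rw [mdeg_zero_iff.mp hd]
    simp only [Finsupp.single_zero, add_zero]
    exact Relation.ReflTransGen.refl
  | succ k ih =>
    intro c d hd
    have hdne : d ≠ 0 := by
      intro h; rw [h, mdeg_zero_iff.mpr rfl] at hd; omega
    obtain ⟨j, hj⟩ : ∃ j, d j ≠ 0 := by
      by_contra h'; push_neg at h'; exact hdne (Finsupp.ext h')
    have hsle : Finsupp.single j 1 ≤ d := Finsupp.single_le_iff.mpr (by omega)
    set d' := d - Finsupp.single j 1 with hd'
    have hdd : d = d' + Finsupp.single j 1 := (tsub_add_cancel_of_le hsle).symm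
    have hd'm : mdeg d' = k := by
      have := mdeg_add d' (Finsupp.single j 1)
      rw [← hdd, hd, mdeg_single] at this
      omega
    by_cases hj0 : j = 0
    · have e1 : c + Finsupp.single (0 : Fin (n+1)) (k + 1)
          = (c + Finsupp.single 0 1) + Finsupp.single 0 k := by
        rw [add_assoc, ← Finsupp.single_add, Nat.add_comm k 1]
      have e2 : c + d = (c + Finsupp.single 0 1) + d' := by
        rw [hdd, hj0]; abel
      rw [e1, e2]
      exact ih (c + Finsupp.single 0 1) d' hd'm
    · have e1 : c + Finsupp.single (0 : Fin (n+1)) (k + 1)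
          = (c + Finsupp.single 0 1) + Finsupp.single 0 k := by
        rw [add_assoc, ← Finsupp.single_add, Nat.add_comm k 1]
      have path : Relation.ReflTransGen BorelStep (c + Finsupp.single 0 (k+1))
          ((c + Finsupp.single 0 1) + d') := by
        rw [e1]; exact ih (c + Finsupp.single 0 1) d' hd'm
      refine path.tail ?_
      refine ⟨0, j, ?_, ?_⟩
      · exact Fin.pos_of_ne_zero hj0
      · rw [hdd]; abel

lemma minBasis_apply_zero {n : ℕ} {J : Set (Mon (n + 1))} (hJss : StronglyStable J)
    (hJsat : J = msat J) {b : Mon (n + 1)} (hb : b ∈ MinBasis J) : b 0 = 0 := by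
  by_contra h0
  set b' := b - Finsupp.single 0 (b 0) with hb'
  have hbb : b = b' + Finsupp.single 0 (b 0) :=
    (tsub_add_cancel_of_le (Finsupp.single_le_iff.mpr le_rfl)).symm
  have hb'J : b' ∈ J := by
    rw [hJsat]
    refine ⟨b 0, fun d hd => ?_⟩
    have hpath := borel_chain (b 0) b' d hd
    rw [← hbb] at hpath
    rcases (Relation.reflTransGen_iff_eq_or_transGen.mp hpath) with h | h
    · rw [h]; exact hb.1
    · exact hJss.2 b hb.1 _ h
  have hle : b' ≤ b := tsub_le_self
  have := hb.2 b' hb'J hle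
  have : b' 0 = b 0 := by rw [this]
  simp [hb'] at this
  omega

lemma emb_apply_zero {n : ℕ} (b : Mon n) : emb b 0 = 0 :=
  Finsupp.mapDomain_notin_range _ _ (by simp [Fin.succ_ne_zero, eq_comm])

lemma emb_apply_succ {n : ℕ} (b : Mon n) (i : Fin n) : emb b i.succ = b i :=
  Finsupp.mapDomain_apply (Fin.succ_injective n) _ _

lemma dehomM_apply {n : ℕ} (v : Mon (n + 1)) (i : Fin n) : dehomM v i = v i.succ := rfl

end Aux

/-- (1) for `𝔧 ⊆ R` strongly stable, `x^γ ∈ N(𝔧)` iff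
`x_0^r x^γ ∈ N(𝔧^h)` for all `r ≥ 0`; (2) for `J ⊆ S` saturated strongly
stable, `x^γ ∈ N(J)` iff `(x^γ)^a ∈ N(J^a)`. -/
theorem sousEscalier_homogenize_dehomogenize {n : ℕ}
    (𝔧 : Set (Mon n)) (hss : StronglyStable 𝔧)
    (J : Set (Mon (n + 1))) (hJss : StronglyStable J) (hJsat : J = msat J) :
    (∀ γ : Mon n,
      γ ∉ 𝔧 ↔ ∀ r : ℕ, emb γ + Finsupp.single 0 r ∉ genBy (emb '' MinBasis 𝔧)) ∧
    (∀ γ : Mon (n + 1),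
      γ ∉ J ↔ dehomM γ ∉ genBy (dehomM '' MinBasis J)) := by
  constructor
  · intro γ
    have key : ∀ r : ℕ, ∀ b : Mon n,
        (emb b ≤ emb γ + Finsupp.single 0 r ↔ b ≤ γ) := by
      intro r b
      constructor
      · intro h; rw [Finsupp.le_def]; intro i
        have := Finsupp.le_def.mp h i.succ
        simpa [emb_apply_succ, Finsupp.single_apply_eq_zero, (Fin.succ_ne_zero i).symm] using this
      · intro h; rw [Finsupp.le_def]; intro i
        refine Fin.cases ?_ ?_ i
        · simp [emb_apply_zero]
        · intro j
          simp only [emb_apply_succ, Finsupp.add_apply]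
          have := Finsupp.le_def.mp h j
          omega
    constructor
    · rintro hγ r ⟨v, ⟨b, hbB, rfl⟩, hle⟩
      exact hγ ((mem_iff_minBasis_le hss.1 γ).mpr ⟨b, hbB, (key r b).mp hle⟩)
    · intro h hγ
      obtain ⟨b, hbB, hle⟩ := (mem_iff_minBasis_le hss.1 γ).mp hγ
      exact h 0 ⟨emb b, ⟨b, hbB, rfl⟩, (key 0 b).mpr hle⟩
  · intro γ
    have key : ∀ b ∈ MinBasis J, (dehomM b ≤ dehomM γ ↔ b ≤ γ) := by
      intro b hb
      constructor
      · intro h; rw [Finsupp.le_def]; intro i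
        refine Fin.cases ?_ ?_ i
        · rw [minBasis_apply_zero hJss hJsat hb]; omega
        · intro j; exact Finsupp.le_def.mp h j
      · intro h; rw [Finsupp.le_def]; intro i
        exact Finsupp.le_def.mp h i.succ
    constructor
    · rintro hγ ⟨v, ⟨b, hbB, rfl⟩, hle⟩
      exact hγ ((mem_iff_minBasis_le hJss.1 γ).mpr ⟨b, hbB, (key b hbB).mp hle⟩)
    · intro h hγ
      obtain ⟨b, hbB, hle⟩ := (mem_iff_minBasis_le hJss.1 γ).mp hγ
      exact h ⟨dehomM b, ⟨b, hbB, rfl⟩, (key b hbB).mpr hle⟩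

end Paper
end
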